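/- Let α, β ∈ ℂ with |α|² + |β|² = 1 and ψ = (α, β) ∈ ℂ²; let X = ![![0,1],![1,0]] and Z = ![![1,0],![0,−1]] be the Pauli matrices, and let qZ = |⟨ψ, Zψ⟩|², qX = |⟨ψ, Xψ⟩|², qXZ = |⟨ψ, XZψ⟩|². Let p : {0,1} × {0,1} → ℝ satisfy p(0,s) + p(1,s) = 1 for each s ∈ {0,1} (p(y,s) is the probability the receiver decodes y given the sender's bit s), and set P = p(0,0) − p(0,1). Define Bob's density matrix ρ_B = (1/4) Σ_{y₁,y₂,s₁,s₂ ∈ {0,1}} p(y₁,s₁)·p(y₂,s₂) · (X^{y₁⊕s₁} Z^{y₂⊕s₂} ψ)(X^{y₁⊕s₁} Z^{y₂⊕s₂} ψ)†, where ⊕ is addition modulo 2 and v v† denotes the outer product of v ∈ ℂ² with its conjugate. Then the teleportation fidelity satisfies ⟨ψ, ρ_B ψ⟩ = 1/2 + P·(qX + qZ + qXZ·P)/2 (in particular this inner product is real). -/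

import Mathlib

open Matrix

/-- Fidelity of the modified teleportation protocol: with Bob's mixed state
`ρ_B = (1/4) Σ p(y₁,s₁) p(y₂,s₂) (X^{y₁⊕s₁} Z^{y₂⊕s₂} ψ)(X^{y₁⊕s₁} Z^{y₂⊕s₂} ψ)†`,
the fidelity is `⟨ψ, ρ_B ψ⟩ = 1/2 + P(qX + qZ + qXZ·P)/2`, `P = p(0,0) − p(0,1)`. -/
theorem teleportation_fidelity (α β : ℂ)
    (hnorm : ‖α‖ ^ 2 + ‖β‖ ^ 2 = 1)
    (p : Fin 2 → Fin 2 → ℝ)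
    (hp : ∀ s : Fin 2, p 0 s + p 1 s = 1) :
    let ψ : Fin 2 → ℂ := ![α, β]
    let X : Matrix (Fin 2) (Fin 2) ℂ := !![0, 1; 1, 0]
    let Z : Matrix (Fin 2) (Fin 2) ℂ := !![1, 0; 0, -1]
    let qZ : ℝ := ‖star ψ ⬝ᵥ Z.mulVec ψ‖ ^ 2
    let qX : ℝ := ‖star ψ ⬝ᵥ X.mulVec ψ‖ ^ 2
    let qXZ : ℝ := ‖star ψ ⬝ᵥ (X * Z).mulVec ψ‖ ^ 2
    let P : ℝ := p 0 0 - p 0 1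
    let ρB : Matrix (Fin 2) (Fin 2) ℂ :=
      (1 / 4 : ℂ) • ∑ y₁ : Fin 2, ∑ y₂ : Fin 2, ∑ s₁ : Fin 2, ∑ s₂ : Fin 2,
        ((p y₁ s₁ * p y₂ s₂ : ℝ) : ℂ) •
          vecMulVec
            ((X ^ ((y₁ + s₁ : Fin 2) : ℕ) * Z ^ ((y₂ + s₂ : Fin 2) : ℕ)).mulVec ψ)
            (star ((X ^ ((y₁ + s₁ : Fin 2) : ℕ) * Z ^ ((y₂ + s₂ : Fin 2) : ℕ)).mulVec ψ))
    star ψ ⬝ᵥ ρB.mulVec ψ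
      = ((1 / 2 + P * (qX + qZ + qXZ * P) / 2 : ℝ) : ℂ) := by
  intro ψ X Z qZ qX qXZ P ρB
  have h10 : p 1 0 = 1 - p 0 0 := by linarith [hp 0]
  have h11 : p 1 1 = 1 - p 0 1 := by linarith [hp 1]
  have hC : (starRingEnd ℂ) α * α + (starRingEnd ℂ) β * β = 1 := by
    rw [Complex.conj_mul', Complex.conj_mul']
    norm_cast
  have habs : ∀ w : ℂ, ((‖w‖ : ℝ) : ℂ) ^ 2 = w * (starRingEnd ℂ) w := fun w => by
    rw [← Complex.ofReal_pow, Complex.sq_norm]; exact (Complex.mul_conj w).symm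
  have key : ∀ v x : Fin 2 → ℂ, (vecMulVec v (star v)).mulVec x
      = (star v ⬝ᵥ x) • v := by
    intro v x
    funext i
    simp [Matrix.mulVec, vecMulVec_apply, dotProduct, Fin.sum_univ_two]
    ring
  have hXv : X.mulVec ψ = ![β, α] := by
    funext i; fin_cases i <;> simp [X, ψ, Matrix.mulVec, dotProduct, Fin.sum_univ_two]
  have hZv : Z.mulVec ψ = ![α, -β] := by
    funext i; fin_cases i <;> simp [Z, ψ, Matrix.mulVec, dotProduct, Fin.sum_univ_two]
  have hXZ : (X * Z).mulVec ψ = ![-β, α] := by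
    funext i; fin_cases i <;> simp [X, Z, ψ, Matrix.mulVec, Matrix.mul_apply, dotProduct, Fin.sum_univ_two]
  have c00 : ((0 + 0 : Fin 2) : ℕ) = 0 := rfl
  have c01 : ((0 + 1 : Fin 2) : ℕ) = 1 := rfl
  have c10 : ((1 + 0 : Fin 2) : ℕ) = 1 := rfl
  have c11 : ((1 + 1 : Fin 2) : ℕ) = 0 := rfl
  simp only [ρB, qX, qZ, qXZ, P]
  push_cast
  simp only [habs]
  simp only [Fin.sum_univ_two, c00, c01, c10, c11, pow_zero, pow_one, Matrix.one_mul,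
    Matrix.mul_one, h10, h11]
  simp only [Matrix.smul_mulVec, Matrix.add_mulVec, dotProduct_add, dotProduct_smul,
    key, Matrix.one_mulVec, hXv, hZv, hXZ]
  simp only [dotProduct, Fin.sum_univ_two, ψ, Pi.star_apply, Matrix.cons_val_zero,
    Matrix.cons_val_one, Matrix.head_cons, smul_eq_mul, Pi.smul_apply, RCLike.star_def,
    Complex.ofReal_sub, Complex.ofReal_one]
  simp only [map_add, map_sub, map_neg, _root_.map_mul, Complex.conj_conj]
  linear_combination (((starRingEnd ℂ) α * α + (starRingEnd ℂ) β * β + 1) / 2) * hC
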